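/- Consider the fuzzy frame F with W = {w, w', w''}, R(w,w') = R(w,w'') = 2/3 and R = 0 on all other pairs, and the KGinv-model on F in which every propositional variable q satisfies v(q,w) = 1, v(q,w') = 1/5 and v(q,w'') = 1/4. Then v(◇p,w) = 1/4, but there is no ◇-free formula ψ of L_inv (i.e., built only from variables, ¬ᵢ, ∧, →, □) with v(ψ,w) ∈ {1/4, 3/4}. -/
import Mathlib

noncomputable def Gimp (x y : ℝ) : ℝ := if x ≤ y then 1 else y

inductive Fml : Type
  | var : ℕ → Fml
  | inv : Fml → Fml
  | and : Fml → Fml → Fml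
  | imp : Fml → Fml → Fml
  | box : Fml → Fml
  | dia : Fml → Fml
  deriving DecidableEq

noncomputable def Fml.eval {W : Type} (R : W → W → ℝ) (v : ℕ → W → ℝ) : Fml → W → ℝ
  | .var p, w => v p w
  | .inv φ, w => 1 - Fml.eval R v φ w
  | .and φ χ, w => min (Fml.eval R v φ w) (Fml.eval R v χ w)
  | .imp φ χ, w => Gimp (Fml.eval R v φ w) (Fml.eval R v χ w)
  | .box φ, w => sInf (Set.range fun w' => Gimp (R w w') (Fml.eval R v φ w'))
  | .dia φ, w => sSup (Set.range fun w' => min (R w w') (Fml.eval R v φ w'))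

def KGinvValid {W : Type} (R : W → W → ℝ) (φ : Fml) : Prop :=
  ∀ v : ℕ → W → ℝ, (∀ p w, v p w ∈ Set.Icc (0:ℝ) 1) → ∀ w : W, Fml.eval R v φ w = 1

noncomputable def R3 : Fin 3 → Fin 3 → ℝ :=
  fun i j => if i = 0 ∧ (j = 1 ∨ j = 2) then 2/3 else 0

noncomputable def v3 : ℕ → Fin 3 → ℝ :=
  fun _ w => if w = 0 then 1 else if w = 1 then 1/5 else 1/4

def DiaFree : Fml → Prop
  | .var _ => True
  | .inv φ => DiaFree φ
  | .and φ χ => DiaFree φ ∧ DiaFree χ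
  | .imp φ χ => DiaFree φ ∧ DiaFree χ
  | .box φ => DiaFree φ
  | .dia _ => False

lemma range_fin3 (f : Fin 3 → ℝ) : Set.range f = {f 0, f 1, f 2} := by
  ext x
  constructor
  · rintro ⟨i, rfl⟩; fin_cases i <;> simp
  · rintro (h | h | h) <;> exact ⟨_, h.symm⟩

lemma sInf_triple (x y z : ℝ) : sInf {x, y, z} = min x (min y z) := by
  have : ({x, y, z} : Set ℝ) = insert x {y, z} := rfl
  rw [this, csInf_insert (Set.toFinite _).bddBelow ⟨y, by simp⟩, csInf_pair]

lemma sSup_triple (x y z : ℝ) : sSup {x, y, z} = max x (max y z) := by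
  have : ({x, y, z} : Set ℝ) = insert x {y, z} := rfl
  rw [this, csSup_insert (Set.toFinite _).bddAbove ⟨y, by simp⟩, csSup_pair]

def Aset : Set ℝ := {0, 1/5, 4/5, 1}
def Bset : Set (ℝ × ℝ) := {(0, 0), (1/5, 1/4), (4/5, 3/4), (1, 1)}

lemma key : ∀ ψ : Fml, DiaFree ψ →
    Fml.eval R3 v3 ψ 0 ∈ Aset ∧
    (Fml.eval R3 v3 ψ 1, Fml.eval R3 v3 ψ 2) ∈ Bset := by
  intro ψ hψ
  induction ψ with
  | var p =>
      simp only [Fml.eval, v3, Aset, Bset]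
      norm_num [Fin.ext_iff]
  | inv φ ih =>
      obtain ⟨ha, hb⟩ := ih hψ
      simp only [Fml.eval]
      constructor
      · simp only [Aset, Set.mem_insert_iff, Set.mem_singleton_iff] at ha ⊢
        rcases ha with h | h | h | h <;> rw [h] <;> norm_num
      · simp only [Bset, Set.mem_insert_iff, Set.mem_singleton_iff, Prod.mk.injEq] at hb ⊢
        rcases hb with ⟨h1, h2⟩ | ⟨h1, h2⟩ | ⟨h1, h2⟩ | ⟨h1, h2⟩ <;> rw [h1, h2] <;> norm_num
  | and φ χ ih1 ih2 =>
      obtain ⟨ha1, hb1⟩ := ih1 hψ.1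
      obtain ⟨ha2, hb2⟩ := ih2 hψ.2
      simp only [Fml.eval]
      constructor
      · rcases min_cases (Fml.eval R3 v3 φ 0) (Fml.eval R3 v3 χ 0) with ⟨h, _⟩ | ⟨h, _⟩ <;>
          rw [h] <;> assumption
      · simp only [Bset, Set.mem_insert_iff, Set.mem_singleton_iff, Prod.mk.injEq] at hb1 hb2 ⊢
        rcases hb1 with ⟨h1, h2⟩ | ⟨h1, h2⟩ | ⟨h1, h2⟩ | ⟨h1, h2⟩ <;>
          rcases hb2 with ⟨h3, h4⟩ | ⟨h3, h4⟩ | ⟨h3, h4⟩ | ⟨h3, h4⟩ <;>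
          rw [h1, h2, h3, h4] <;> norm_num
  | imp φ χ ih1 ih2 =>
      obtain ⟨ha1, hb1⟩ := ih1 hψ.1
      obtain ⟨ha2, hb2⟩ := ih2 hψ.2
      simp only [Fml.eval]
      constructor
      · unfold Gimp
        split_ifs
        · simp [Aset]
        · exact ha2
      · simp only [Bset, Set.mem_insert_iff, Set.mem_singleton_iff, Prod.mk.injEq] at hb1 hb2 ⊢
        rcases hb1 with ⟨h1, h2⟩ | ⟨h1, h2⟩ | ⟨h1, h2⟩ | ⟨h1, h2⟩ <;>
          rcases hb2 with ⟨h3, h4⟩ | ⟨h3, h4⟩ | ⟨h3, h4⟩ | ⟨h3, h4⟩ <;>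
          rw [h1, h2, h3, h4] <;> norm_num [Gimp]
  | box φ ih =>
      obtain ⟨ha, hb⟩ := ih hψ
      have h0 : 0 ≤ Fml.eval R3 v3 φ 0 := by
        simp only [Aset, Set.mem_insert_iff, Set.mem_singleton_iff] at ha
        rcases ha with h | h | h | h <;> rw [h] <;> norm_num
      have h12 : 0 ≤ Fml.eval R3 v3 φ 1 ∧ 0 ≤ Fml.eval R3 v3 φ 2 := by
        simp only [Bset, Set.mem_insert_iff, Set.mem_singleton_iff, Prod.mk.injEq] at hb
        rcases hb with ⟨h1, h2⟩ | ⟨h1, h2⟩ | ⟨h1, h2⟩ | ⟨h1, h2⟩ <;> rw [h1, h2] <;> norm_num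
      have hR0 : R3 0 0 = 0 := by simp [R3]
      have hR1 : R3 0 1 = 2/3 := by simp [R3]
      have hR2 : R3 0 2 = 2/3 := by simp [R3]
      have hRz : ∀ i : Fin 3, i ≠ 0 → ∀ j, R3 i j = 0 := by
        intro i hi j; simp [R3, hi]
      have ev : ∀ w : Fin 3, Fml.eval R3 v3 (.box φ) w =
          min (Gimp (R3 w 0) (Fml.eval R3 v3 φ 0))
            (min (Gimp (R3 w 1) (Fml.eval R3 v3 φ 1)) (Gimp (R3 w 2) (Fml.eval R3 v3 φ 2))) := by
        intro w
        show sInf _ = _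
        rw [range_fin3, sInf_triple]
      constructor
      · rw [ev 0, hR0, hR1, hR2]
        have g0 : Gimp 0 (Fml.eval R3 v3 φ 0) = 1 := by simp [Gimp, h0]
        rw [g0]
        simp only [Bset, Set.mem_insert_iff, Set.mem_singleton_iff, Prod.mk.injEq] at hb
        simp only [Aset, Set.mem_insert_iff, Set.mem_singleton_iff]
        rcases hb with ⟨h1, h2⟩ | ⟨h1, h2⟩ | ⟨h1, h2⟩ | ⟨h1, h2⟩ <;> rw [h1, h2] <;>
          norm_num [Gimp]
      · rw [ev 1, ev 2]
        rw [hRz 1 (by decide) 0, hRz 1 (by decide) 1, hRz 1 (by decide) 2,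
            hRz 2 (by decide) 0, hRz 2 (by decide) 1, hRz 2 (by decide) 2]
        simp only [Gimp, if_pos h0, if_pos h12.1, if_pos h12.2]
        simp [Bset]
  | dia φ ih => exact absurd hψ (by simp [DiaFree])

theorem statement2 :
    Fml.eval R3 v3 (.dia (.var 0)) 0 = 1/4 ∧
    ¬ ∃ ψ : Fml, DiaFree ψ ∧
      (Fml.eval R3 v3 ψ 0 = 1/4 ∨ Fml.eval R3 v3 ψ 0 = 3/4) := by
  constructor
  · show sSup _ = _
    rw [range_fin3, sSup_triple]
    show max (min (R3 0 0) (v3 0 0)) (max (min (R3 0 1) (v3 0 1)) (min (R3 0 2) (v3 0 2))) = 1/4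
    simp only [R3, v3]
    norm_num [Fin.ext_iff]
  · rintro ⟨ψ, hdf, h | h⟩ <;>
    · have hm := (key ψ hdf).1
      rw [h] at hm
      simp only [Aset, Set.mem_insert_iff, Set.mem_singleton_iff] at hm
      norm_num at hm
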